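/- Two round annuli A₁ = {z ∈ ℂ : r₁ < |z| < R₁} and A₂ = {z ∈ ℂ : r₂ < |z| < R₂} (with 0 < rᵢ < Rᵢ < ∞) are biholomorphically equivalent if and only if R₁/r₁ = R₂/r₂. -/

import Mathlib

/-- The round annulus `{z : ℂ | r < |z| < R}`. -/
def roundAnnulus (r R : ℝ) : Set ℂ := {z : ℂ | r < ‖z‖ ∧ ‖z‖ < R}

open Complex Set

lemma isOpen_roundAnnulus (r R : ℝ) : IsOpen (roundAnnulus r R) := by
  have : roundAnnulus r R = ((norm : ℂ → ℝ) ⁻¹' Ioi r) ∩ ((norm : ℂ → ℝ) ⁻¹' Iio R) := by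
    ext z; simp [roundAnnulus, mem_setOf_eq]
  rw [this]
  exact (isOpen_Ioi.preimage continuous_norm).inter (isOpen_Iio.preimage continuous_norm)

lemma roundAnnulus_eq_image {a b : ℝ} (ha : 0 < a) :
    roundAnnulus a b = (fun p : ℝ × ℝ => (p.1 : ℂ) * Complex.exp (p.2 * Complex.I)) '' (Ioo a b ×ˢ univ) := by
  ext z
  constructor
  · rintro ⟨h1, h2⟩
    exact ⟨(‖z‖, Complex.arg z), ⟨⟨h1, h2⟩, trivial⟩, Complex.norm_mul_exp_arg_mul_I z⟩
  · rintro ⟨⟨s, θ⟩, ⟨⟨hs1, hs2⟩, -⟩, rfl⟩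
    have hs0 : (0:ℝ) < s := lt_trans ha hs1
    have : ‖(s : ℂ) * Complex.exp (θ * Complex.I)‖ = s := by
      rw [norm_mul, Complex.norm_exp]
      simp [Complex.norm_real, Real.norm_eq_abs, abs_of_pos hs0]
    exact ⟨by rw [this]; exact hs1, by rw [this]; exact hs2⟩

lemma isPreconnected_roundAnnulus {a b : ℝ} (ha : 0 < a) :
    IsPreconnected (roundAnnulus a b) := by
  rw [roundAnnulus_eq_image ha]
  refine IsPreconnected.image ?_ _ ?_
  · exact ((convex_Ioo a b).prod convex_univ).isPreconnected
  · apply Continuous.continuousOn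
    exact (Complex.continuous_ofReal.comp continuous_fst).mul
      (Complex.continuous_exp.comp ((Complex.continuous_ofReal.comp continuous_snd).mul continuous_const))
variable {r1 R1 r2 R2 : ℝ} {f g : ℂ → ℂ}

/-- Properness: near the boundary of the source annulus, `f` is near the boundary
of the target annulus. -/
lemma annulus_dichotomy (hr1 : 0 < r1) (hR1 : r1 < R1)
    (hg : DifferentiableOn ℂ g (roundAnnulus r2 R2))
    (hmg : Set.MapsTo g (roundAnnulus r2 R2) (roundAnnulus r1 R1))
    (hgf : ∀ z ∈ roundAnnulus r1 R1, g (f z) = z)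
    {ε : ℝ} (hε : 0 < ε) :
    ∃ δ > 0, ∀ z ∈ roundAnnulus r1 R1,
      (‖z‖ < r1 + δ ∨ R1 - δ < ‖z‖) →
      (‖f z‖ < r2 + ε ∨ R2 - ε < ‖f z‖) := by
  set K : Set ℂ := (norm : ℂ → ℝ) ⁻¹' (Icc (r2 + ε) (R2 - ε)) with hK
  have hKsub : K ⊆ roundAnnulus r2 R2 := by
    intro w hw
    exact ⟨lt_of_lt_of_le (by linarith) hw.1, lt_of_le_of_lt hw.2 (by linarith)⟩
  have hKc : IsCompact K := by
    refine Metric.isCompact_of_isClosed_isBounded (isClosed_Icc.preimage continuous_norm) ?_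
    refine (Metric.isBounded_closedBall (x := (0:ℂ)) (r := R2 - ε)).subset ?_
    intro w hw
    rw [mem_closedBall_zero_iff]
    exact hw.2
  have hCc : IsCompact (g '' K) := hKc.image_of_continuousOn (hg.continuousOn.mono hKsub)
  have hCsub : g '' K ⊆ roundAnnulus r1 R1 := by
    rintro - ⟨w, hw, rfl⟩; exact hmg (hKsub hw)
  have key : ∀ δ : ℝ, (∀ y ∈ g '' K, r1 + δ ≤ ‖y‖ ∧ ‖y‖ ≤ R1 - δ) →
      ∀ z ∈ roundAnnulus r1 R1, (‖z‖ < r1 + δ ∨ R1 - δ < ‖z‖) →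
      (‖f z‖ < r2 + ε ∨ R2 - ε < ‖f z‖) := by
    intro δ hδ z hz hside
    by_contra h
    push_neg at h
    have hfzK : f z ∈ K := ⟨h.1, h.2⟩
    have hzC : z ∈ g '' K := ⟨f z, hfzK, hgf z hz⟩
    rcases hδ z hzC with ⟨h1, h2⟩
    rcases hside with h3 | h3
    · exact absurd h1 (not_le.2 h3)
    · exact absurd h2 (not_le.2 h3)
  rcases (g '' K).eq_empty_or_nonempty with hE | hNE
  · refine ⟨1, one_pos, key 1 ?_⟩
    rw [hE]; intro y hy; exact absurd hy (notMem_empty y)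
  · obtain ⟨zmin, hzmin, hmin⟩ := hCc.exists_isMinOn hNE (continuous_norm.continuousOn)
    obtain ⟨zmax, hzmax, hmax⟩ := hCc.exists_isMaxOn hNE (continuous_norm.continuousOn)
    have h1 : r1 < ‖zmin‖ := (hCsub hzmin).1
    have h2 : ‖zmax‖ < R1 := (hCsub hzmax).2
    refine ⟨min (‖zmin‖ - r1) (R1 - ‖zmax‖), lt_min (by linarith) (by linarith), key _ ?_⟩
    intro y hy
    constructor
    · calc r1 + min (‖zmin‖ - r1) (R1 - ‖zmax‖)
          ≤ r1 + (‖zmin‖ - r1) := by gcongr; exact min_le_left _ _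
        _ = ‖zmin‖ := by ring
        _ ≤ ‖y‖ := hmin hy
    · calc ‖y‖ ≤ ‖zmax‖ := hmax hy
        _ = R1 - (R1 - ‖zmax‖) := by ring
        _ ≤ R1 - min (‖zmin‖ - r1) (R1 - ‖zmax‖) := by
            gcongr; exact min_le_right _ _

lemma const_on_preconn {r1 R1 mid : ℝ} {f : ℂ → ℂ} {S : Set ℂ}
    (hS : IsPreconnected S) (hSsub : S ⊆ roundAnnulus r1 R1)
    (hf : ContinuousOn f (roundAnnulus r1 R1))
    (hdi : ∀ z ∈ S, ‖f z‖ < mid ∨ mid < ‖f z‖) :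
    (∀ z ∈ S, ‖f z‖ < mid) ∨ (∀ z ∈ S, mid < ‖f z‖) := by
  have hcont : ContinuousOn (fun z => ‖f z‖) (roundAnnulus r1 R1) :=
    continuous_norm.comp_continuousOn hf
  have hu : IsOpen (roundAnnulus r1 R1 ∩ (fun z => ‖f z‖) ⁻¹' (Iio (mid:ℝ))) :=
    hcont.isOpen_inter_preimage (isOpen_roundAnnulus _ _) isOpen_Iio
  have hv : IsOpen (roundAnnulus r1 R1 ∩ (fun z => ‖f z‖) ⁻¹' (Ioi mid)) :=
    hcont.isOpen_inter_preimage (isOpen_roundAnnulus _ _) isOpen_Ioi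
  have hdisj : Disjoint (roundAnnulus r1 R1 ∩ (fun z => ‖f z‖) ⁻¹' (Iio (mid:ℝ)))
      (roundAnnulus r1 R1 ∩ (fun z => ‖f z‖) ⁻¹' (Ioi mid)) := by
    rw [Set.disjoint_left]
    rintro z ⟨-, h1⟩ ⟨-, h2⟩
    simp only [mem_preimage, mem_Iio] at h1
    simp only [mem_preimage, mem_Ioi] at h2
    exact absurd (h1.trans h2) (lt_irrefl _)
  have hcover : S ⊆ (roundAnnulus r1 R1 ∩ (fun z => ‖f z‖) ⁻¹' (Iio (mid:ℝ))) ∪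
      (roundAnnulus r1 R1 ∩ (fun z => ‖f z‖) ⁻¹' (Ioi mid)) := by
    intro z hz
    rcases hdi z hz with h | h
    · exact Or.inl ⟨hSsub hz, h⟩
    · exact Or.inr ⟨hSsub hz, h⟩
  rcases hS.subset_or_subset hu hv hdisj hcover with h | h
  · exact Or.inl fun z hz => (h hz).2
  · exact Or.inr fun z hz => (h hz).2

lemma side_eps {r1 R1 r2 R2 : ℝ} {f : ℂ → ℂ} {Q : ℝ → ℂ → Prop}
    (hr2 : 0 < r2) (hR2 : r2 < R2)
    (hmf : Set.MapsTo f (roundAnnulus r1 R1) (roundAnnulus r2 R2))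
    (hmono : ∀ {δ δ' : ℝ}, δ ≤ δ' → ∀ z, Q δ z → Q δ' z)
    (hdich : ∀ ε : ℝ, 0 < ε → ∃ δ > 0, ∀ z ∈ roundAnnulus r1 R1, Q δ z →
      (‖f z‖ < r2 + ε ∨ R2 - ε < ‖f z‖))
    {δ0 : ℝ} (hδ0 : 0 < δ0)
    (hconst : (∀ z ∈ roundAnnulus r1 R1, Q δ0 z → ‖f z‖ < (r2 + R2)/2) ∨
              (∀ z ∈ roundAnnulus r1 R1, Q δ0 z → (r2 + R2)/2 < ‖f z‖)) :
    ∃ c ∈ ({r2, R2} : Set ℝ), ∀ ε > 0, ∃ δ > 0, ∀ z ∈ roundAnnulus r1 R1,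
      Q δ z → |‖f z‖ - c| < ε := by
  have hε0 : (0:ℝ) < (R2 - r2)/4 := by linarith
  rcases hconst with hc | hc
  · refine ⟨r2, Set.mem_insert _ _, fun ε hε => ?_⟩
    obtain ⟨δ1, hδ1, hd⟩ := hdich (min ε ((R2 - r2)/4)) (lt_min hε hε0)
    refine ⟨min δ1 δ0, lt_min hδ1 hδ0, fun z hz hQ => ?_⟩
    have hQ1 := hmono (min_le_left δ1 δ0) z hQ
    have hQ0 := hmono (min_le_right δ1 δ0) z hQ
    have hlt := hc z hz hQ0
    rcases hd z hz hQ1 with h | h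
    · have h2 : r2 < ‖f z‖ := (hmf hz).1
      rw [abs_lt]
      constructor
      · linarith
      · calc ‖f z‖ - r2 < min ε ((R2 - r2)/4) := by linarith
          _ ≤ ε := min_le_left _ _
    · exfalso
      have : R2 - min ε ((R2 - r2)/4) ≥ R2 - (R2 - r2)/4 := by
        have := min_le_right ε ((R2 - r2)/4); linarith
      linarith
  · refine ⟨R2, Set.mem_insert_of_mem _ rfl, fun ε hε => ?_⟩
    obtain ⟨δ1, hδ1, hd⟩ := hdich (min ε ((R2 - r2)/4)) (lt_min hε hε0)
    refine ⟨min δ1 δ0, lt_min hδ1 hδ0, fun z hz hQ => ?_⟩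
    have hQ1 := hmono (min_le_left δ1 δ0) z hQ
    have hQ0 := hmono (min_le_right δ1 δ0) z hQ
    have hlt := hc z hz hQ0
    rcases hd z hz hQ1 with h | h
    · exfalso
      have : r2 + min ε ((R2 - r2)/4) ≤ r2 + (R2 - r2)/4 := by
        have := min_le_right ε ((R2 - r2)/4); linarith
      linarith
    · have h2 : ‖f z‖ < R2 := (hmf hz).2
      rw [abs_lt]
      constructor
      · have : min ε ((R2 - r2)/4) ≤ ε := min_le_left _ _
        linarith
      · linarith

lemma boundary_consts {r1 R1 r2 R2 : ℝ} {f g : ℂ → ℂ}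
    (hr1 : 0 < r1) (hR1 : r1 < R1) (hr2 : 0 < r2) (hR2 : r2 < R2)
    (hf : DifferentiableOn ℂ f (roundAnnulus r1 R1))
    (hg : DifferentiableOn ℂ g (roundAnnulus r2 R2))
    (hmf : Set.MapsTo f (roundAnnulus r1 R1) (roundAnnulus r2 R2))
    (hmg : Set.MapsTo g (roundAnnulus r2 R2) (roundAnnulus r1 R1))
    (hgf : ∀ z ∈ roundAnnulus r1 R1, g (f z) = z) :
    ∃ cin ∈ ({r2, R2} : Set ℝ), ∃ cout ∈ ({r2, R2} : Set ℝ),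
      (∀ ε > 0, ∃ δ > 0, ∀ z ∈ roundAnnulus r1 R1,
        ‖z‖ < r1 + δ → |‖f z‖ - cin| < ε) ∧
      (∀ ε > 0, ∃ δ > 0, ∀ z ∈ roundAnnulus r1 R1,
        R1 - δ < ‖z‖ → |‖f z‖ - cout| < ε) := by
  have hε0 : (0:ℝ) < (R2 - r2)/4 := by linarith
  obtain ⟨δ0, hδ0pos, hδ0⟩ := annulus_dichotomy hr1 hR1 hg hmg hgf hε0
  set δ1 : ℝ := min δ0 ((R1 - r1)/2) with hδ1def
  have hδ1pos : 0 < δ1 := lt_min hδ0pos (by linarith)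
  have hδ1le : δ1 ≤ δ0 := min_le_left _ _
  have hδ1le' : δ1 ≤ (R1 - r1)/2 := min_le_right _ _
  -- dichotomy in two one-sided forms
  have hdin : ∀ ε : ℝ, 0 < ε → ∃ δ > 0, ∀ z ∈ roundAnnulus r1 R1, ‖z‖ < r1 + δ →
      (‖f z‖ < r2 + ε ∨ R2 - ε < ‖f z‖) := by
    intro ε hε
    obtain ⟨δ, hδ, h⟩ := annulus_dichotomy hr1 hR1 hg hmg hgf hε
    exact ⟨δ, hδ, fun z hz hq => h z hz (Or.inl hq)⟩
  have hdout : ∀ ε : ℝ, 0 < ε → ∃ δ > 0, ∀ z ∈ roundAnnulus r1 R1, R1 - δ < ‖z‖ →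
      (‖f z‖ < r2 + ε ∨ R2 - ε < ‖f z‖) := by
    intro ε hε
    obtain ⟨δ, hδ, h⟩ := annulus_dichotomy hr1 hR1 hg hmg hgf hε
    exact ⟨δ, hδ, fun z hz hq => h z hz (Or.inr hq)⟩
  -- the inner thin annulus
  have hSinsub : roundAnnulus r1 (r1 + δ1) ⊆ roundAnnulus r1 R1 := by
    rintro z ⟨h1, h2⟩; exact ⟨h1, by linarith⟩
  have hSoutsub : roundAnnulus (R1 - δ1) R1 ⊆ roundAnnulus r1 R1 := by
    rintro z ⟨h1, h2⟩; exact ⟨by linarith, h2⟩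
  have hdiin : ∀ z ∈ roundAnnulus r1 (r1 + δ1),
      ‖f z‖ < (r2 + R2)/2 ∨ (r2 + R2)/2 < ‖f z‖ := by
    intro z hz
    rcases hδ0 z (hSinsub hz) (Or.inl (by have := hz.2; linarith)) with h | h
    · exact Or.inl (by linarith)
    · exact Or.inr (by linarith)
  have hdiout : ∀ z ∈ roundAnnulus (R1 - δ1) R1,
      ‖f z‖ < (r2 + R2)/2 ∨ (r2 + R2)/2 < ‖f z‖ := by
    intro z hz
    rcases hδ0 z (hSoutsub hz) (Or.inr (by have := hz.1; linarith)) with h | h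
    · exact Or.inl (by linarith)
    · exact Or.inr (by linarith)
  have hcin := const_on_preconn (isPreconnected_roundAnnulus hr1) hSinsub
    hf.continuousOn hdiin
  have hcout := const_on_preconn (isPreconnected_roundAnnulus (a := R1 - δ1) (by linarith))
    hSoutsub hf.continuousOn hdiout
  have hconstin : (∀ z ∈ roundAnnulus r1 R1, ‖z‖ < r1 + δ1 →
        ‖f z‖ < (r2 + R2)/2) ∨
      (∀ z ∈ roundAnnulus r1 R1, ‖z‖ < r1 + δ1 →
        (r2 + R2)/2 < ‖f z‖) := by
    rcases hcin with h | h
    · exact Or.inl (fun z hz hq => h z ⟨hz.1, hq⟩)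
    · exact Or.inr (fun z hz hq => h z ⟨hz.1, hq⟩)
  have hconstout : (∀ z ∈ roundAnnulus r1 R1, R1 - δ1 < ‖z‖ →
        ‖f z‖ < (r2 + R2)/2) ∨
      (∀ z ∈ roundAnnulus r1 R1, R1 - δ1 < ‖z‖ →
        (r2 + R2)/2 < ‖f z‖) := by
    rcases hcout with h | h
    · exact Or.inl (fun z hz hq => h z ⟨hq, hz.2⟩)
    · exact Or.inr (fun z hz hq => h z ⟨hq, hz.2⟩)
  obtain ⟨cin, hcinmem, hcinp⟩ := side_eps (Q := fun δ z => ‖z‖ < r1 + δ)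
    hr2 hR2 hmf (fun hle z hq => by linarith) hdin hδ1pos hconstin
  obtain ⟨cout, hcoutmem, hcoutp⟩ := side_eps (Q := fun δ z => R1 - δ < ‖z‖)
    hr2 hR2 hmf (fun hle z hq => by linarith) hdout hδ1pos hconstout
  exact ⟨cin, hcinmem, cout, hcoutmem, hcinp, hcoutp⟩

lemma strip_bigO {G : ℂ → ℂ} {a b M : ℝ} (hab : a < b)
    (h : ∀ w : ℂ, w.re ∈ Ioo a b → ‖G w‖ ≤ M) :
    ∃ c < Real.pi / (b - a), ∃ B,
      G =O[Filter.comap (_root_.abs ∘ Complex.im) Filter.atTop ⊓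
            Filter.principal (Complex.re ⁻¹' Ioo a b)]
        fun z => Real.exp (B * Real.exp (c * |z.im|)) := by
  refine ⟨0, div_pos Real.pi_pos (by linarith), M, ?_⟩
  apply Asymptotics.IsBigO.of_bound 1
  have hev : ∀ᶠ w in (Filter.comap (_root_.abs ∘ Complex.im) Filter.atTop ⊓
      Filter.principal (Complex.re ⁻¹' Ioo a b)), w.re ∈ Ioo a b :=
    Filter.eventually_inf_principal.2 (Filter.Eventually.of_forall (fun w hw => hw))
  filter_upwards [hev] with w hw
  rw [one_mul]
  have h1 : ‖G w‖ ≤ M := h w hw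
  have h2 : M ≤ Real.exp M := by
    have := Real.add_one_le_exp M; linarith
  calc ‖G w‖ ≤ M := h1
    _ ≤ Real.exp M := h2
    _ ≤ ‖Real.exp (M * Real.exp (0 * |w.im|))‖ := by
        simp [Real.norm_eq_abs, abs_of_pos (Real.exp_pos _)]

set_option maxHeartbeats 1000000 in
lemma upper_core {r1 R1 r2 R2 cin cout m β : ℝ} {f : ℂ → ℂ}
    (hr1 : 0 < r1) (hR1 : r1 < R1) (hr2 : 0 < r2) (hR2 : r2 < R2)
    (hcin : 0 < cin) (hcout : 0 < cout)
    (hf : DifferentiableOn ℂ f (roundAnnulus r1 R1))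
    (hmf : Set.MapsTo f (roundAnnulus r1 R1) (roundAnnulus r2 R2))
    (hin : ∀ ε > 0, ∃ δ > 0, ∀ z ∈ roundAnnulus r1 R1,
      ‖z‖ < r1 + δ → |‖f z‖ - cin| < ε)
    (hout : ∀ ε > 0, ∃ δ > 0, ∀ z ∈ roundAnnulus r1 R1,
      R1 - δ < ‖z‖ → |‖f z‖ - cout| < ε)
    (hma : m * Real.log r1 + β = Real.log cin)
    (hmb : m * Real.log R1 + β = Real.log cout) :
    ∀ w : ℂ, w.re ∈ Ioo (Real.log r1) (Real.log R1) →
      ‖f (Complex.exp w)‖ * Real.exp (-(m * w.re)) ≤ Real.exp β := by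
  set a1 := Real.log r1 with ha1
  set b1 := Real.log R1 with hb1
  have ha1b1 : a1 < b1 := Real.log_lt_log hr1 hR1
  have hexpa1 : Real.exp a1 = r1 := Real.exp_log hr1
  have hexpb1 : Real.exp b1 = R1 := Real.exp_log (lt_trans hr1 hR1)
  have hexp_mem : ∀ w : ℂ, w.re ∈ Ioo a1 b1 → Complex.exp w ∈ roundAnnulus r1 R1 := by
    intro w hw
    constructor
    · rw [Complex.norm_exp, ← hexpa1]; exact Real.exp_lt_exp.2 hw.1
    · rw [Complex.norm_exp, ← hexpb1]; exact Real.exp_lt_exp.2 hw.2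
  set G : ℂ → ℂ := fun w => f (Complex.exp w) * Complex.exp (-(m : ℂ) * w) with hGdef
  have habsG : ∀ w : ℂ, ‖G w‖
      = ‖f (Complex.exp w)‖ * Real.exp (-(m * w.re)) := by
    intro w
    have hre : ((-(m : ℂ)) * w).re = -(m * w.re) := by
      simp [Complex.mul_re]
    rw [hGdef]
    simp only [norm_mul, Complex.norm_exp, hre]
  have hGdiff : DifferentiableOn ℂ G (Complex.re ⁻¹' Ioo a1 b1) := by
    refine DifferentiableOn.mul ?_ ?_
    · exact hf.comp Complex.differentiable_exp.differentiableOn (fun w hw => hexp_mem w hw)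
    · exact ((differentiable_id.const_mul (-(m:ℂ))).cexp).differentiableOn
  intro w0 hw0
  rw [← habsG w0]
  refine le_of_forall_pos_le_add (fun η hη => ?_)
  -- Step A : choose ε1
  set E : ℝ := max (Real.exp (-(m * a1))) (Real.exp (-(m * b1))) with hEdef
  have hEpos : 0 < E := lt_max_of_lt_left (Real.exp_pos _)
  set ε1 : ℝ := η / (4 * E) with hε1def
  have hε1pos : 0 < ε1 := by positivity
  have hcina : cin * Real.exp (-(m * a1)) = Real.exp β := by
    rw [← Real.exp_log hcin, ← Real.exp_add]
    congr 1; linarith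
  have hcoutb : cout * Real.exp (-(m * b1)) = Real.exp β := by
    rw [← Real.exp_log hcout, ← Real.exp_add]
    congr 1; linarith
  have hA1 : (cin + ε1) * Real.exp (-(m * a1)) ≤ Real.exp β + η / 4 := by
    have h1 : ε1 * Real.exp (-(m * a1)) ≤ ε1 * E := by
      apply mul_le_mul_of_nonneg_left (le_max_left _ _) (le_of_lt hε1pos)
    have h2 : ε1 * E = η / 4 := by
      rw [hε1def]; field_simp
    nlinarith [Real.exp_pos (-(m * a1))]
  have hA2 : (cout + ε1) * Real.exp (-(m * b1)) ≤ Real.exp β + η / 4 := by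
    have h1 : ε1 * Real.exp (-(m * b1)) ≤ ε1 * E := by
      apply mul_le_mul_of_nonneg_left (le_max_right _ _) (le_of_lt hε1pos)
    have h2 : ε1 * E = η / 4 := by
      rw [hε1def]; field_simp
    nlinarith [Real.exp_pos (-(m * b1))]
  -- Step B : boundary data
  obtain ⟨δin, hδin, hinp⟩ := hin ε1 hε1pos
  obtain ⟨δout, hδout, houtp⟩ := hout ε1 hε1pos
  -- Step C : choose a'
  have hconta : Filter.Tendsto (fun a => (cin + ε1) * Real.exp (-(m * a))) (nhdsWithin a1 (Ioi a1))
      (nhds ((cin + ε1) * Real.exp (-(m * a1)))) := by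
    apply Filter.Tendsto.mono_left _ nhdsWithin_le_nhds
    exact (Continuous.mul continuous_const
      ((continuous_const.mul continuous_id).neg.rexp)).continuousAt
  have hconta2 : Filter.Tendsto (fun a => Real.exp a) (nhdsWithin a1 (Ioi a1))
      (nhds r1) := by
    rw [← hexpa1]
    exact Filter.Tendsto.mono_left Real.continuous_exp.continuousAt nhdsWithin_le_nhds
  have heva : ∀ᶠ a in nhdsWithin a1 (Ioi a1),
      ((cin + ε1) * Real.exp (-(m * a)) < Real.exp β + η / 2
        ∧ Real.exp a < r1 + δin) ∧ (a1 < a ∧ a < min b1 w0.re) := by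
    refine Filter.Eventually.and (Filter.Eventually.and ?_ ?_) ?_
    · exact hconta.eventually_lt_const (by linarith [Real.exp_pos β])
    · exact hconta2.eventually_lt_const (by linarith)
    · refine Filter.Eventually.and ?_ ?_
      · exact eventually_mem_nhdsWithin
      · have hid : Filter.Tendsto (fun a : ℝ => a) (nhdsWithin a1 (Ioi a1)) (nhds a1) :=
          Filter.Tendsto.mono_left Filter.tendsto_id nhdsWithin_le_nhds
        exact hid.eventually_lt_const (lt_min ha1b1 hw0.1)
  obtain ⟨a', ⟨⟨hCa, hCa2⟩, ha'gt, ha'lt⟩⟩ := heva.exists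
  have ha'b1 : a' < b1 := lt_of_lt_of_le ha'lt (min_le_left _ _)
  have ha'w0 : a' ≤ w0.re := le_of_lt (lt_of_lt_of_le ha'lt (min_le_right _ _))
  -- Step D : choose b'
  have hcontb : Filter.Tendsto (fun b => (cout + ε1) * Real.exp (-(m * b)))
      (nhdsWithin b1 (Iio b1)) (nhds ((cout + ε1) * Real.exp (-(m * b1)))) := by
    apply Filter.Tendsto.mono_left _ nhdsWithin_le_nhds
    exact (Continuous.mul continuous_const
      ((continuous_const.mul continuous_id).neg.rexp)).continuousAt
  have hcontb2 : Filter.Tendsto (fun b => Real.exp b) (nhdsWithin b1 (Iio b1))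
      (nhds R1) := by
    rw [← hexpb1]
    exact Filter.Tendsto.mono_left Real.continuous_exp.continuousAt nhdsWithin_le_nhds
  have hevb : ∀ᶠ b in nhdsWithin b1 (Iio b1),
      ((cout + ε1) * Real.exp (-(m * b)) < Real.exp β + η / 2
        ∧ R1 - δout < Real.exp b) ∧ (b < b1 ∧ max a' w0.re < b) := by
    refine Filter.Eventually.and (Filter.Eventually.and ?_ ?_) ?_
    · exact hcontb.eventually_lt_const (by linarith [Real.exp_pos β])
    · exact hcontb2.eventually_const_lt (by linarith)
    · refine Filter.Eventually.and ?_ ?_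
      · exact eventually_mem_nhdsWithin
      · have hid : Filter.Tendsto (fun b : ℝ => b) (nhdsWithin b1 (Iio b1)) (nhds b1) :=
          Filter.Tendsto.mono_left Filter.tendsto_id nhdsWithin_le_nhds
        exact hid.eventually_const_lt (max_lt ha'b1 hw0.2)
  obtain ⟨b', ⟨⟨hCb, hCb2⟩, hb'lt, hb'gt⟩⟩ := hevb.exists
  have ha'b' : a' < b' := lt_of_le_of_lt (le_max_left _ _) hb'gt
  have hw0b' : w0.re ≤ b' := le_of_lt (lt_of_le_of_lt (le_max_right _ _) hb'gt)
  -- strip inclusion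
  have hstrip_sub : Ioo a' b' ⊆ Ioo a1 b1 := Ioo_subset_Ioo (le_of_lt ha'gt) (le_of_lt hb'lt)
  -- Step E : Phragmen-Lindelof
  have hfd : DiffContOnCl ℂ G (Complex.re ⁻¹' Ioo a' b') := by
    apply DifferentiableOn.diffContOnCl
    apply hGdiff.mono
    intro w hw
    have h1 : w.re ∈ closure (Ioo a' b') := Complex.continuous_re.closure_preimage_subset _ hw
    rw [closure_Ioo (ne_of_lt ha'b')] at h1
    exact ⟨lt_of_lt_of_le ha'gt h1.1, lt_of_le_of_lt h1.2 hb'lt⟩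
  have hMbound : ∀ w : ℂ, w.re ∈ Ioo a' b' → ‖G w‖
      ≤ R2 * max (Real.exp (-(m * a'))) (Real.exp (-(m * b'))) := by
    intro w hw
    rw [habsG w]
    have hwm : w.re ∈ Ioo a1 b1 := hstrip_sub hw
    have h1 : ‖f (Complex.exp w)‖ ≤ R2 := le_of_lt (hmf (hexp_mem w hwm)).2
    have h2 : Real.exp (-(m * w.re)) ≤ max (Real.exp (-(m * a'))) (Real.exp (-(m * b'))) := by
      rcases le_or_gt 0 m with hm | hm
      · refine le_max_of_le_left (Real.exp_le_exp.2 ?_)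
        have := hw.1
        nlinarith
      · refine le_max_of_le_right (Real.exp_le_exp.2 ?_)
        have := hw.2
        nlinarith
    have h3 : (0:ℝ) ≤ Real.exp (-(m * w.re)) := le_of_lt (Real.exp_pos _)
    calc ‖f (Complex.exp w)‖ * Real.exp (-(m * w.re))
        ≤ R2 * Real.exp (-(m * w.re)) := mul_le_mul_of_nonneg_right h1 h3
      _ ≤ R2 * max (Real.exp (-(m * a'))) (Real.exp (-(m * b'))) := by
          apply mul_le_mul_of_nonneg_left h2 (by linarith)
  have hbigO := strip_bigO (G := G)
    (M := R2 * max (Real.exp (-(m * a'))) (Real.exp (-(m * b')))) ha'b' hMbound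
  have hle_a : ∀ w : ℂ, w.re = a' → ‖G w‖ ≤ Real.exp β + η / 2 := by
    intro w hwre
    have hwm : w.re ∈ Ioo a1 b1 := by rw [hwre]; exact ⟨ha'gt, ha'b1⟩
    have hzmem := hexp_mem w hwm
    have habs : ‖Complex.exp w‖ < r1 + δin := by
      rw [Complex.norm_exp, hwre]; exact hCa2
    have hb := hinp (Complex.exp w) hzmem habs
    have hfb : ‖f (Complex.exp w)‖ < cin + ε1 := by
      have := abs_lt.1 hb; linarith [this.2]
    have hGn : ‖G w‖ = ‖f (Complex.exp w)‖ * Real.exp (-(m * w.re)) := habsG w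
    rw [hGn, hwre]
    calc ‖f (Complex.exp w)‖ * Real.exp (-(m * a'))
        ≤ (cin + ε1) * Real.exp (-(m * a')) :=
          mul_le_mul_of_nonneg_right (le_of_lt hfb) (le_of_lt (Real.exp_pos _))
      _ ≤ Real.exp β + η / 2 := le_of_lt hCa
  have hle_b : ∀ w : ℂ, w.re = b' → ‖G w‖ ≤ Real.exp β + η / 2 := by
    intro w hwre
    have hwm : w.re ∈ Ioo a1 b1 := by rw [hwre]; exact ⟨lt_trans ha'gt ha'b', hb'lt⟩
    have hzmem := hexp_mem w hwm
    have habs : R1 - δout < ‖Complex.exp w‖ := by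
      rw [Complex.norm_exp, hwre]; exact hCb2
    have hb := houtp (Complex.exp w) hzmem habs
    have hfb : ‖f (Complex.exp w)‖ < cout + ε1 := by
      have := abs_lt.1 hb; linarith [this.2]
    have hGn : ‖G w‖ = ‖f (Complex.exp w)‖ * Real.exp (-(m * w.re)) := habsG w
    rw [hGn, hwre]
    calc ‖f (Complex.exp w)‖ * Real.exp (-(m * b'))
        ≤ (cout + ε1) * Real.exp (-(m * b')) :=
          mul_le_mul_of_nonneg_right (le_of_lt hfb) (le_of_lt (Real.exp_pos _))
      _ ≤ Real.exp β + η / 2 := le_of_lt hCb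
  have hPL := PhragmenLindelof.vertical_strip (f := G) (z := w0)
    (C := Real.exp β + η / 2) hfd hbigO hle_a hle_b ha'w0 hw0b'
  have hGn0 : ‖G w0‖ = ‖G w0‖ := rfl
  rw [hGn0] at hPL
  linarith

set_option maxHeartbeats 1000000 in
lemma abs_core {r1 R1 r2 R2 cin cout m β : ℝ} {f : ℂ → ℂ}
    (hr1 : 0 < r1) (hR1 : r1 < R1) (hr2 : 0 < r2) (hR2 : r2 < R2)
    (hcin : 0 < cin) (hcout : 0 < cout)
    (hf : DifferentiableOn ℂ f (roundAnnulus r1 R1))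
    (hmf : Set.MapsTo f (roundAnnulus r1 R1) (roundAnnulus r2 R2))
    (hin : ∀ ε > 0, ∃ δ > 0, ∀ z ∈ roundAnnulus r1 R1,
      ‖z‖ < r1 + δ → |‖f z‖ - cin| < ε)
    (hout : ∀ ε > 0, ∃ δ > 0, ∀ z ∈ roundAnnulus r1 R1,
      R1 - δ < ‖z‖ → |‖f z‖ - cout| < ε)
    (hma : m * Real.log r1 + β = Real.log cin)
    (hmb : m * Real.log R1 + β = Real.log cout) :
    ∀ w : ℂ, w.re ∈ Ioo (Real.log r1) (Real.log R1) →
      ‖f (Complex.exp w)‖ = Real.exp (β + m * w.re) := by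
  have hfne : ∀ z ∈ roundAnnulus r1 R1, f z ≠ 0 := by
    intro z hz h0
    have h := (hmf hz).1
    rw [h0] at h
    simp at h
    linarith
  have hupper := upper_core hr1 hR1 hr2 hR2 hcin hcout hf hmf hin hout hma hmb
  -- now the transformed function
  set A : ℝ := r2 * R2 with hA
  have hApos : 0 < A := by rw [hA]; exact mul_pos hr2 (lt_trans hr2 hR2)
  set ftil : ℂ → ℂ := fun z => (A : ℂ) / f z with hftil
  have hftildiff : DifferentiableOn ℂ ftil (roundAnnulus r1 R1) :=
    (differentiableOn_const _).div hf hfne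
  have habsftil : ∀ z ∈ roundAnnulus r1 R1, ‖ftil z‖ = A / ‖f z‖ := by
    intro z hz
    rw [hftil]
    simp only [norm_div, Complex.norm_real, Real.norm_eq_abs, abs_of_pos hApos]
  have hmftil : Set.MapsTo ftil (roundAnnulus r1 R1) (roundAnnulus r2 R2) := by
    intro z hz
    have h1 := (hmf hz).1
    have h2 := (hmf hz).2
    have hfz : 0 < ‖f z‖ := lt_trans hr2 h1
    refine ⟨?_, ?_⟩
    · rw [habsftil z hz, lt_div_iff₀ hfz, hA]; nlinarith
    · rw [habsftil z hz, div_lt_iff₀ hfz, hA]; nlinarith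
  -- transformed boundary conditions
  have htrans : ∀ (c : ℝ), 0 < c →
      (∀ ε > 0, ∃ δ > 0, ∀ z ∈ roundAnnulus r1 R1,
        ‖z‖ < r1 + δ → |‖f z‖ - c| < ε) →
      (∀ ε > 0, ∃ δ > 0, ∀ z ∈ roundAnnulus r1 R1,
        ‖z‖ < r1 + δ → |‖ftil z‖ - A / c| < ε) := by
    intro c hc hprop ε hε
    obtain ⟨δ, hδ, hp⟩ := hprop (ε * (r2 * c) / A) (by positivity)
    refine ⟨δ, hδ, fun z hz hq => ?_⟩
    have hd := hp z hz hq
    have h1 := (hmf hz).1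
    have hfz : 0 < ‖f z‖ := lt_trans hr2 h1
    rw [habsftil z hz]
    have heq : A / ‖f z‖ - A / c
        = A * (c - ‖f z‖) / (‖f z‖ * c) := by
      field_simp
    rw [heq, abs_div, abs_mul, abs_of_pos hApos, abs_of_pos (mul_pos hfz hc)]
    rw [div_lt_iff₀ (mul_pos hfz hc)]
    have habs : |c - ‖f z‖| < ε * (r2 * c) / A := by
      rw [abs_sub_comm]; exact hd
    have h5 : A * |c - ‖f z‖| < A * (ε * (r2 * c) / A) :=
      mul_lt_mul_of_pos_left habs hApos
    have h6 : A * (ε * (r2 * c) / A) = ε * (r2 * c) := by field_simp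
    have h7 : ε * (r2 * c) ≤ ε * (‖f z‖ * c) := by
      have h1' : r2 ≤ ‖f z‖ := le_of_lt h1
      have hε' : (0:ℝ) ≤ ε := le_of_lt hε
      have hc' : (0:ℝ) ≤ c := le_of_lt hc
      nlinarith [mul_nonneg (mul_nonneg hε' hc') (sub_nonneg.2 h1')]
    linarith
  have htransout : ∀ (c : ℝ), 0 < c →
      (∀ ε > 0, ∃ δ > 0, ∀ z ∈ roundAnnulus r1 R1,
        R1 - δ < ‖z‖ → |‖f z‖ - c| < ε) →
      (∀ ε > 0, ∃ δ > 0, ∀ z ∈ roundAnnulus r1 R1,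
        R1 - δ < ‖z‖ → |‖ftil z‖ - A / c| < ε) := by
    intro c hc hprop ε hε
    obtain ⟨δ, hδ, hp⟩ := hprop (ε * (r2 * c) / A) (by positivity)
    refine ⟨δ, hδ, fun z hz hq => ?_⟩
    have hd := hp z hz hq
    have h1 := (hmf hz).1
    have hfz : 0 < ‖f z‖ := lt_trans hr2 h1
    rw [habsftil z hz]
    have heq : A / ‖f z‖ - A / c
        = A * (c - ‖f z‖) / (‖f z‖ * c) := by
      field_simp
    rw [heq, abs_div, abs_mul, abs_of_pos hApos, abs_of_pos (mul_pos hfz hc)]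
    rw [div_lt_iff₀ (mul_pos hfz hc)]
    have habs : |c - ‖f z‖| < ε * (r2 * c) / A := by
      rw [abs_sub_comm]; exact hd
    have h5 : A * |c - ‖f z‖| < A * (ε * (r2 * c) / A) :=
      mul_lt_mul_of_pos_left habs hApos
    have h6 : A * (ε * (r2 * c) / A) = ε * (r2 * c) := by field_simp
    have h7 : ε * (r2 * c) ≤ ε * (‖f z‖ * c) := by
      have h1' : r2 ≤ ‖f z‖ := le_of_lt h1
      have hε' : (0:ℝ) ≤ ε := le_of_lt hε
      have hc' : (0:ℝ) ≤ c := le_of_lt hc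
      nlinarith [mul_nonneg (mul_nonneg hε' hc') (sub_nonneg.2 h1')]
    linarith
  have hmatil : (-m) * Real.log r1 + (Real.log A - β) = Real.log (A / cin) := by
    rw [Real.log_div (ne_of_gt hApos) (ne_of_gt hcin)]
    linarith
  have hmbtil : (-m) * Real.log R1 + (Real.log A - β) = Real.log (A / cout) := by
    rw [Real.log_div (ne_of_gt hApos) (ne_of_gt hcout)]
    linarith
  have hlower := upper_core hr1 hR1 hr2 hR2 (by positivity : 0 < A / cin)
    (by positivity : 0 < A / cout) hftildiff hmftil
    (htrans cin hcin hin) (htransout cout hcout hout) hmatil hmbtil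
  -- combine
  intro w hw
  have hzmem : Complex.exp w ∈ roundAnnulus r1 R1 := by
    constructor
    · rw [Complex.norm_exp, ← Real.exp_log hr1]; exact Real.exp_lt_exp.2 hw.1
    · rw [Complex.norm_exp, ← Real.exp_log (lt_trans hr1 hR1)]; exact Real.exp_lt_exp.2 hw.2
  have hfz : 0 < ‖f (Complex.exp w)‖ := lt_trans hr2 (hmf hzmem).1
  have hU := hupper w hw
  have hL := hlower w hw
  rw [habsftil _ hzmem] at hL
  have hexpA : Real.exp (Real.log A - β) = A * Real.exp (-β) := by
    rw [Real.exp_sub, Real.exp_log hApos, Real.exp_neg]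
    exact div_eq_mul_inv _ _
  -- hU : |f| * exp(-(m w.re)) ≤ exp β   ⇒ |f| ≤ exp (β + m w.re)
  have hU' : ‖f (Complex.exp w)‖ ≤ Real.exp (β + m * w.re) := by
    have h := mul_le_mul_of_nonneg_right hU (le_of_lt (Real.exp_pos (m * w.re)))
    rw [mul_assoc, ← Real.exp_add, ← Real.exp_add] at h
    simpa using h
  -- hL : (A/|f|) * exp(-(-m w.re)) ≤ exp (log A - β) ⇒ exp (β + m w.re) ≤ |f|
  have hL' : Real.exp (β + m * w.re) ≤ ‖f (Complex.exp w)‖ := by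
    rw [div_mul_eq_mul_div, div_le_iff₀ hfz, hexpA] at hL
    have h2 : A * Real.exp (-(-m * w.re)) = A * Real.exp (m * w.re) := by ring_nf
    rw [h2] at hL
    -- hL : A * exp (m w.re) ≤ A * exp (-β) * |f|
    have h3 : Real.exp (m * w.re) ≤ Real.exp (-β) * ‖f (Complex.exp w)‖ := by
      have hA' := hApos
      nlinarith [Real.exp_pos (m * w.re), Real.exp_pos (-β)]
    have h4 := mul_le_mul_of_nonneg_left h3 (le_of_lt (Real.exp_pos β))
    rw [← mul_assoc, ← Real.exp_add, ← Real.exp_add] at h4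
    simpa [add_neg_cancel] using h4
  linarith

set_option maxHeartbeats 1000000 in
lemma integer_slope {r1 R1 r2 R2 cin cout m β : ℝ} {f : ℂ → ℂ}
    (hr1 : 0 < r1) (hR1 : r1 < R1) (hr2 : 0 < r2) (hR2 : r2 < R2)
    (hcin : 0 < cin) (hcout : 0 < cout)
    (hf : DifferentiableOn ℂ f (roundAnnulus r1 R1))
    (hmf : Set.MapsTo f (roundAnnulus r1 R1) (roundAnnulus r2 R2))
    (hin : ∀ ε > 0, ∃ δ > 0, ∀ z ∈ roundAnnulus r1 R1,
      ‖z‖ < r1 + δ → |‖f z‖ - cin| < ε)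
    (hout : ∀ ε > 0, ∃ δ > 0, ∀ z ∈ roundAnnulus r1 R1,
      R1 - δ < ‖z‖ → |‖f z‖ - cout| < ε)
    (hma : m * Real.log r1 + β = Real.log cin)
    (hmb : m * Real.log R1 + β = Real.log cout) :
    ∃ n : ℤ, m = (n : ℝ) := by
  have habs := abs_core hr1 hR1 hr2 hR2 hcin hcout hf hmf hin hout hma hmb
  set a1 := Real.log r1 with ha1
  set b1 := Real.log R1 with hb1
  have ha1b1 : a1 < b1 := Real.log_lt_log hr1 hR1
  have hexp_mem : ∀ w : ℂ, w.re ∈ Ioo a1 b1 → Complex.exp w ∈ roundAnnulus r1 R1 := by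
    intro w hw
    constructor
    · rw [Complex.norm_exp, ← Real.exp_log hr1]; exact Real.exp_lt_exp.2 hw.1
    · rw [Complex.norm_exp, ← Real.exp_log (lt_trans hr1 hR1)]; exact Real.exp_lt_exp.2 hw.2
  set S : Set ℂ := Complex.re ⁻¹' Ioo a1 b1 with hSdef
  have hSopen : IsOpen S := isOpen_Ioo.preimage Complex.continuous_re
  have hSconv : Convex ℝ S := (convex_Ioo a1 b1).linear_preimage Complex.reLm
  have hSpre : IsPreconnected S := hSconv.isPreconnected
  set G : ℂ → ℂ := fun w => f (Complex.exp w) * Complex.exp (-(m : ℂ) * w) with hGdef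
  have hGdiff : DifferentiableOn ℂ G S := by
    refine DifferentiableOn.mul ?_ ?_
    · exact hf.comp Complex.differentiable_exp.differentiableOn (fun w hw => hexp_mem w hw)
    · exact ((differentiable_id.const_mul (-(m:ℂ))).cexp).differentiableOn
  have habsG : ∀ w ∈ S, ‖G w‖ = Real.exp β := by
    intro w hw
    have hre : ((-(m : ℂ)) * w).re = -(m * w.re) := by simp [Complex.mul_re]
    rw [hGdef]
    simp only [norm_mul, Complex.norm_exp, hre]
    rw [habs w hw, ← Real.exp_add]
    congr 1
    ring
  set w0 : ℂ := (((a1 + b1)/2 : ℝ) : ℂ) with hw0def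
  have hw0S : w0 ∈ S := by
    simp only [hSdef, mem_preimage, hw0def, Complex.ofReal_re, mem_Ioo]
    constructor <;> linarith
  have hmax : IsMaxOn (norm ∘ G) S w0 := by
    refine isMaxOn_iff.2 (fun w hw => ?_)
    simp only [Function.comp_apply]
    rw [habsG w hw, habsG w0 hw0S]
  have heq := Complex.eqOn_of_isPreconnected_of_isMaxOn_norm hSpre hSopen hGdiff hw0S hmax
  set w1 : ℂ := w0 + 2*Real.pi*Complex.I with hw1def
  have hw1S : w1 ∈ S := by
    have hre : w1.re = w0.re := by simp [hw1def]
    simp only [hSdef, mem_preimage, hre]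
    exact hw0S
  have h1 : G w1 = G w0 := heq hw1S
  have hexp1 : Complex.exp w1 = Complex.exp w0 := by
    rw [hw1def, Complex.exp_add, Complex.exp_two_pi_mul_I, mul_one]
  have hfne0 : f (Complex.exp w0) ≠ 0 := by
    intro h0
    have h2 : ‖f (Complex.exp w0)‖ = Real.exp (β + m * w0.re) := habs w0 hw0S
    rw [h0] at h2
    simp at h2
    exact absurd h2.symm (ne_of_gt (Real.exp_pos _))
  have h2 : Complex.exp (-(m:ℂ) * w1) = Complex.exp (-(m:ℂ) * w0) := by
    apply mul_left_cancel₀ hfne0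
    have h1' : f (Complex.exp w1) * Complex.exp (-(m:ℂ) * w1)
        = f (Complex.exp w0) * Complex.exp (-(m:ℂ) * w0) := h1
    rw [hexp1] at h1'
    exact h1'
  obtain ⟨n, hn⟩ := Complex.exp_eq_exp_iff_exists_int.1 h2
  have h2πI : (2*(Real.pi:ℂ)*Complex.I) ≠ 0 := by
    simp [Real.pi_ne_zero, Complex.I_ne_zero]
  have h3 : (-(m:ℂ)) * (2*Real.pi*Complex.I) = n * (2*Real.pi*Complex.I) := by
    rw [hw1def] at hn
    ring_nf at hn ⊢
    linear_combination hn
  have h4 : (-(m:ℂ)) = (n:ℂ) := mul_right_cancel₀ h2πI h3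
  refine ⟨-n, ?_⟩
  have h5 : (m:ℂ) = ((-n : ℤ) : ℂ) := by push_cast; linear_combination -h4
  exact_mod_cast h5

set_option maxHeartbeats 1000000 in
lemma log_le_log_of_pair {r1 R1 r2 R2 : ℝ} {f g : ℂ → ℂ}
    (hr1 : 0 < r1) (hR1 : r1 < R1) (hr2 : 0 < r2) (hR2 : r2 < R2)
    (hf : DifferentiableOn ℂ f (roundAnnulus r1 R1))
    (hg : DifferentiableOn ℂ g (roundAnnulus r2 R2))
    (hmf : Set.MapsTo f (roundAnnulus r1 R1) (roundAnnulus r2 R2))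
    (hmg : Set.MapsTo g (roundAnnulus r2 R2) (roundAnnulus r1 R1))
    (hgf : ∀ z ∈ roundAnnulus r1 R1, g (f z) = z)
    (hfg : ∀ w ∈ roundAnnulus r2 R2, f (g w) = w) :
    Real.log R1 - Real.log r1 ≤ Real.log R2 - Real.log r2 := by
  obtain ⟨cin, hcinmem, cout, hcoutmem, hin, hout⟩ :=
    boundary_consts hr1 hR1 hr2 hR2 hf hg hmf hmg hgf
  simp only [Set.mem_insert_iff, Set.mem_singleton_iff] at hcinmem hcoutmem
  have hr2R2 : 0 < R2 := lt_trans hr2 hR2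
  have hcinpos : 0 < cin := by rcases hcinmem with h | h <;> rw [h] <;> assumption
  have hcoutpos : 0 < cout := by rcases hcoutmem with h | h <;> rw [h] <;> assumption
  set L1 : ℝ := Real.log R1 - Real.log r1 with hL1def
  have hL1 : 0 < L1 := sub_pos.2 (Real.log_lt_log hr1 hR1)
  have hL2 : 0 < Real.log R2 - Real.log r2 := sub_pos.2 (Real.log_lt_log hr2 hR2)
  set m : ℝ := (Real.log cout - Real.log cin) / L1 with hm
  set β : ℝ := Real.log cin - m * Real.log r1 with hβ
  have hma : m * Real.log r1 + β = Real.log cin := by rw [hβ]; ring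
  have hmb : m * Real.log R1 + β = Real.log cout := by
    rw [hβ, hm, hL1def]
    have hL1ne : Real.log R1 - Real.log r1 ≠ 0 := ne_of_gt hL1
    field_simp
    ring
  have habs := abs_core hr1 hR1 hr2 hR2 hcinpos hcoutpos hf hmf hin hout hma hmb
  obtain ⟨n, hn⟩ := integer_slope hr1 hR1 hr2 hR2 hcinpos hcoutpos hf hmf hin hout hma hmb
  have habs' : ∀ z ∈ roundAnnulus r1 R1,
      ‖f z‖ = Real.exp (β + m * Real.log (‖z‖)) := by
    intro z hz
    have hz0 : z ≠ 0 := by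
      intro h0
      rw [h0] at hz
      have := hz.1
      simp at this
      linarith
    have hw : (Complex.log z).re ∈ Ioo (Real.log r1) (Real.log R1) := by
      rw [Complex.log_re]
      exact ⟨Real.log_lt_log hr1 hz.1, Real.log_lt_log (lt_trans hr1 hz.1) hz.2⟩
    have h := habs (Complex.log z) hw
    rw [Complex.exp_log hz0] at h
    rw [h, Complex.log_re]
  have hmne : m ≠ 0 := by
    intro hm0
    have habs2 : ∀ t : ℝ, 0 < t → (t:ℂ) ∈ roundAnnulus r2 R2 → t = Real.exp β := by
      intro t ht hmem
      have h1 := habs' (g t) (hmg hmem)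
      rw [hfg t hmem] at h1
      rw [hm0] at h1
      simp only [zero_mul, add_zero] at h1
      rw [Complex.norm_real, Real.norm_eq_abs, abs_of_pos ht] at h1
      exact h1
    set t1 : ℝ := (3*r2 + R2)/4 with ht1def
    set t2 : ℝ := (r2 + 3*R2)/4 with ht2def
    have ht1pos : 0 < t1 := by rw [ht1def]; linarith
    have ht2pos : 0 < t2 := by rw [ht2def]; linarith
    have ht1mem : (t1:ℂ) ∈ roundAnnulus r2 R2 := by
      constructor <;> rw [Complex.norm_real, Real.norm_eq_abs, abs_of_pos ht1pos, ht1def] <;> linarith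
    have ht2mem : (t2:ℂ) ∈ roundAnnulus r2 R2 := by
      constructor <;> rw [Complex.norm_real, Real.norm_eq_abs, abs_of_pos ht2pos, ht2def] <;> linarith
    have e1 := habs2 t1 ht1pos ht1mem
    have e2 := habs2 t2 ht2pos ht2mem
    rw [ht1def] at e1
    rw [ht2def] at e2
    linarith
  have hnne : n ≠ 0 := by
    intro h0
    apply hmne
    rw [hn, h0]
    simp
  have hn1 : (1:ℝ) ≤ |m| := by
    rw [hn]
    have := Int.one_le_abs hnne
    calc (1:ℝ) ≤ ((|n| : ℤ) : ℝ) := by exact_mod_cast this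
      _ = |((n:ℤ):ℝ)| := by push_cast; rfl
  rcases hcinmem with h1 | h1 <;> rcases hcoutmem with h2 | h2
  · exfalso; apply hmne; rw [hm, h1, h2]; simp
  · have hmeq : m = (Real.log R2 - Real.log r2)/L1 := by rw [hm, h1, h2]
    have hmpos : 0 < m := by rw [hmeq]; exact div_pos hL2 hL1
    rw [abs_of_pos hmpos, hmeq] at hn1
    exact (one_le_div hL1).1 hn1
  · have hmeq : m = -((Real.log R2 - Real.log r2)/L1) := by
      rw [hm, h1, h2]; ring
    have habsm : |m| = (Real.log R2 - Real.log r2)/L1 := by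
      rw [hmeq, abs_neg, abs_of_pos (div_pos hL2 hL1)]
    rw [habsm] at hn1
    exact (one_le_div hL1).1 hn1
  · exfalso; apply hmne; rw [hm, h1, h2]; simp

/-- Two round annuli `{r₁ < |z| < R₁}` and `{r₂ < |z| < R₂}` are biholomorphically
equivalent if and only if `R₁/r₁ = R₂/r₂`. -/
theorem stmt19 (r1 R1 r2 R2 : ℝ) (hr1 : 0 < r1) (hR1 : r1 < R1) (hr2 : 0 < r2)
    (hR2 : r2 < R2) :
    (∃ f g : ℂ → ℂ,
      DifferentiableOn ℂ f (roundAnnulus r1 R1) ∧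
      DifferentiableOn ℂ g (roundAnnulus r2 R2) ∧
      Set.MapsTo f (roundAnnulus r1 R1) (roundAnnulus r2 R2) ∧
      Set.MapsTo g (roundAnnulus r2 R2) (roundAnnulus r1 R1) ∧
      (∀ z ∈ roundAnnulus r1 R1, g (f z) = z) ∧
      (∀ w ∈ roundAnnulus r2 R2, f (g w) = w)) ↔
    R1 / r1 = R2 / r2 := by
  constructor
  · rintro ⟨f, g, hf, hg, hmf, hmg, hgf, hfg⟩
    have h12 := log_le_log_of_pair hr1 hR1 hr2 hR2 hf hg hmf hmg hgf hfg
    have h21 := log_le_log_of_pair hr2 hR2 hr1 hR1 hg hf hmg hmf hfg hgf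
    have hL : Real.log R1 - Real.log r1 = Real.log R2 - Real.log r2 := le_antisymm h12 h21
    have h1 : Real.log (R1/r1) = Real.log (R2/r2) := by
      rw [Real.log_div (ne_of_gt (lt_trans hr1 hR1)) (ne_of_gt hr1),
          Real.log_div (ne_of_gt (lt_trans hr2 hR2)) (ne_of_gt hr2)]
      exact hL
    have hpos1 : 0 < R1/r1 := div_pos (lt_trans hr1 hR1) hr1
    have hpos2 : 0 < R2/r2 := div_pos (lt_trans hr2 hR2) hr2
    calc R1/r1 = Real.exp (Real.log (R1/r1)) := (Real.exp_log hpos1).symm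
      _ = Real.exp (Real.log (R2/r2)) := by rw [h1]
      _ = R2/r2 := Real.exp_log hpos2
  · intro hratio
    have hkey : r2 * R1 = R2 * r1 := by
      rw [div_eq_div_iff (ne_of_gt hr1) (ne_of_gt hr2)] at hratio
      linarith
    have hc1 : ((r1:ℝ):ℂ) ≠ 0 := Complex.ofReal_ne_zero.2 (ne_of_gt hr1)
    have hc2 : ((r2:ℝ):ℂ) ≠ 0 := Complex.ofReal_ne_zero.2 (ne_of_gt hr2)
    refine ⟨fun z => ((r2/r1 : ℝ) : ℂ) * z, fun w => ((r1/r2 : ℝ) : ℂ) * w, ?_, ?_, ?_, ?_, ?_, ?_⟩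
    · exact (differentiable_id.const_mul _).differentiableOn
    · exact (differentiable_id.const_mul _).differentiableOn
    · intro z hz
      have habs : ‖((r2/r1 : ℝ):ℂ) * z‖ = (r2/r1) * ‖z‖ := by
        rw [norm_mul, Complex.norm_real, Real.norm_eq_abs, abs_of_pos (div_pos hr2 hr1)]
      constructor
      · rw [habs]
        calc r2 = (r2/r1)*r1 := by field_simp
          _ < (r2/r1)*‖z‖ := mul_lt_mul_of_pos_left hz.1 (div_pos hr2 hr1)
      · rw [habs]
        calc (r2/r1)*‖z‖ < (r2/r1)*R1 :=
            mul_lt_mul_of_pos_left hz.2 (div_pos hr2 hr1)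
          _ = R2 := by
            rw [div_mul_eq_mul_div, eq_comm, eq_div_iff (ne_of_gt hr1)]
            linarith
    · intro w hw
      have habs : ‖((r1/r2 : ℝ):ℂ) * w‖ = (r1/r2) * ‖w‖ := by
        rw [norm_mul, Complex.norm_real, Real.norm_eq_abs, abs_of_pos (div_pos hr1 hr2)]
      constructor
      · rw [habs]
        calc r1 = (r1/r2)*r2 := by field_simp
          _ < (r1/r2)*‖w‖ := mul_lt_mul_of_pos_left hw.1 (div_pos hr1 hr2)
      · rw [habs]
        calc (r1/r2)*‖w‖ < (r1/r2)*R2 :=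
            mul_lt_mul_of_pos_left hw.2 (div_pos hr1 hr2)
          _ = R1 := by
            rw [div_mul_eq_mul_div, eq_comm, eq_div_iff (ne_of_gt hr2)]
            linarith
    · intro z hz
      push_cast
      field_simp
    · intro w hw
      push_cast
      field_simp
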